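/- Existence of a small sparsified ensemble (probabilistic method with Hoeffding): let T, n, k ≥ 1 be natural numbers, let α : Fin T → ℝ be nonnegative weights with ∑ t, α t = 1, let θ ∈ (0, 1/2], and let B : Fin n → Fin T → Prop. Suppose that for every j : Fin n, ∑_{t ∈ {t | B j t}} α t ≤ 1/2 − θ. If k > (Real.log n) / (2 θ²), then there exists a tuple J : Fin k → Fin T such that for every j : Fin n, the number of indices i : Fin k with B j (J i) is strictly less than k/2. -/

import Mathlib

open Finset

open Classical in
/-- Existence of a small sparsified ensemble: if each of `n` points has weighted
error mass at most `1/2 − θ` under the distribution `α` over `T` predictors, and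
`k > log n / (2θ²)`, then there is a `k`-tuple of predictors such that at every
point, strictly fewer than `k/2` of them err. -/
theorem sparsify_exists
    (T n k : ℕ) (hT : 1 ≤ T) (hn : 1 ≤ n) (hk : 1 ≤ k)
    (α : Fin T → ℝ) (hα0 : ∀ t, 0 ≤ α t) (hα1 : ∑ t, α t = 1)
    (θ : ℝ) (hθ0 : 0 < θ) (hθ1 : θ ≤ 1 / 2)
    (B : Fin n → Fin T → Prop)
    (hB : ∀ j, (∑ t, if B j t then α t else 0) ≤ 1 / 2 - θ)
    (hkbig : Real.log n / (2 * θ ^ 2) < (k : ℝ)) :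
    ∃ J : Fin k → Fin T, ∀ j,
      ((Finset.univ.filter fun i : Fin k => B j (J i)).card : ℝ) < (k : ℝ) / 2 := by
  by_contra hcon
  push_neg at hcon
  -- hcon : ∀ J, ∃ j, (k:ℝ)/2 ≤ card ...
  set W : (Fin k → Fin T) → ℝ := fun J => ∏ i, α (J i) with hWdef
  have hWnn : ∀ J, 0 ≤ W J := fun J => Finset.prod_nonneg fun i _ => hα0 _
  have hWsum : ∑ J : Fin k → Fin T, W J = 1 := by
    rw [← Fintype.sum_pow α k, hα1, one_pow]
  set cnt : Fin n → (Fin k → Fin T) → ℕ :=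
    fun j J => (Finset.univ.filter fun i : Fin k => B j (J i)).card with hcnt
  -- key tail bound for each j
  have tail : ∀ j : Fin n,
      ∑ J : Fin k → Fin T, (if (k : ℝ) / 2 ≤ (cnt j J : ℝ) then W J else 0)
        ≤ Real.exp (-(2 * θ ^ 2) * k) := by
    intro j
    set p : ℝ := ∑ t, if B j t then α t else 0 with hpdef
    have hp0 : 0 ≤ p := Finset.sum_nonneg fun t _ => by
      by_cases h : B j t <;> simp [h, hα0 t]
    have hp : p ≤ 1 / 2 - θ := hB j
    have hple : ∀ t, B j t → α t ≤ p := by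
      intro t ht
      have := Finset.single_le_sum (f := fun t => if B j t then α t else 0)
        (fun t _ => by by_cases h : B j t <;> simp [h, hα0 t]) (Finset.mem_univ t)
      simpa [ht] using this
    by_cases hp0' : p = 0
    · -- all bad tuples have zero weight
      have : ∀ J : Fin k → Fin T,
          (if (k : ℝ) / 2 ≤ (cnt j J : ℝ) then W J else 0) = 0 := by
        intro J
        by_cases hbad : (k : ℝ) / 2 ≤ (cnt j J : ℝ)
        · have hpos : 0 < cnt j J := by
            rcases Nat.eq_zero_or_pos (cnt j J) with h0 | h
            · exfalso
              rw [h0] at hbad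
              have hk1 : (1:ℝ) ≤ (k:ℝ) := by exact_mod_cast hk
              norm_num at hbad
              linarith
            · exact h
          obtain ⟨i, hi⟩ := Finset.card_pos.mp hpos
          rw [Finset.mem_filter] at hi
          have hzero : α (J i) = 0 := by
            have h1 := hple _ hi.2
            rw [hp0'] at h1
            exact le_antisymm h1 (hα0 _)
          have hW0 : W J = 0 := Finset.prod_eq_zero (Finset.mem_univ i) hzero
          simp [hbad, hW0]
        · simp [hbad]
      rw [Finset.sum_congr rfl fun J _ => this J]
      simp [Real.exp_nonneg]
    · have hppos : 0 < p := lt_of_le_of_ne hp0 (Ne.symm hp0')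
      set r : ℝ := (1 - p) / p with hrdef
      have hq : (1:ℝ)/2 + θ ≤ 1 - p := by linarith
      have hqpos : (0:ℝ) < 1 - p := by linarith
      have hr1 : 1 ≤ r := by
        rw [le_div_iff₀ hppos]; linarith
      have hrpos : 0 < r := lt_of_lt_of_le one_pos hr1
      set s : ℝ := Real.sqrt r with hsdef
      have hs1 : 1 ≤ s := by
        rw [hsdef, show (1:ℝ) = Real.sqrt 1 by simp]
        exact Real.sqrt_le_sqrt hr1
      have hspos : 0 < s := lt_of_lt_of_le one_pos hs1
      -- the tilted weight
      set g : Fin T → ℝ := fun t => if B j t then r * α t else α t with hgdef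
      have hgnn : ∀ t, 0 ≤ g t := fun t => by
        by_cases h : B j t <;> simp [hgdef, h, hα0 t, mul_nonneg hrpos.le (hα0 t)]
      have hgsum : ∑ t, g t = 2 * (1 - p) := by
        have : ∀ t, g t = α t + (r - 1) * (if B j t then α t else 0) := by
          intro t; by_cases h : B j t <;> simp [hgdef, h] <;> ring
        rw [Finset.sum_congr rfl fun t _ => this t, Finset.sum_add_distrib,
          ← Finset.mul_sum, hα1, ← hpdef, hrdef]
        field_simp
        ring
      -- per-tuple bound
      have key : ∀ J : Fin k → Fin T,
          (if (k : ℝ) / 2 ≤ (cnt j J : ℝ) then W J else 0) * s ^ k ≤ ∏ i, g (J i) := by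
        intro J
        by_cases hbad : (k : ℝ) / 2 ≤ (cnt j J : ℝ)
        · simp only [hbad, if_true]
          have hprod : ∏ i, g (J i) = r ^ (cnt j J) * W J := by
            have hsplit : ∀ i : Fin k, g (J i) = (if B j (J i) then r else 1) * α (J i) := by
              intro i; by_cases h : B j (J i) <;> simp [hgdef, h]
            rw [Finset.prod_congr rfl fun i _ => hsplit i, Finset.prod_mul_distrib]
            congr 1
            rw [Finset.prod_ite, Finset.prod_const, Finset.prod_const, one_pow, mul_one]
          rw [hprod]
          have hsk : s ^ k ≤ r ^ (cnt j J) := by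
            have h1 : s ^ k = r ^ ((k:ℝ)/2) := by
              rw [hsdef, Real.sqrt_eq_rpow, ← Real.rpow_natCast (r ^ ((1:ℝ)/2)) k,
                ← Real.rpow_mul hrpos.le, show (1:ℝ)/2 * (k:ℝ) = (k:ℝ)/2 by ring]
            have h2 : r ^ (cnt j J) = r ^ ((cnt j J : ℕ) : ℝ) :=
              (Real.rpow_natCast r _).symm
            rw [h1, h2]
            exact Real.rpow_le_rpow_of_exponent_le hr1 hbad
          calc W J * s ^ k ≤ W J * r ^ (cnt j J) :=
                mul_le_mul_of_nonneg_left hsk (hWnn J)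
            _ = r ^ (cnt j J) * W J := mul_comm _ _
        · simp only [hbad, if_false, zero_mul]
          exact Finset.prod_nonneg fun i _ => hgnn _
      have hsum2 : (∑ J : Fin k → Fin T,
          (if (k : ℝ) / 2 ≤ (cnt j J : ℝ) then W J else 0)) * s ^ k
            ≤ (2 * (1 - p)) ^ k := by
        rw [Finset.sum_mul, ← hgsum, Fintype.sum_pow]
        exact Finset.sum_le_sum fun J _ => key J
      have hsk : 0 < s ^ k := pow_pos hspos k
      have h1 : (∑ J : Fin k → Fin T,
          (if (k : ℝ) / 2 ≤ (cnt j J : ℝ) then W J else 0))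
            ≤ (2 * (1 - p) / s) ^ k := by
        rw [div_pow]
        rw [le_div_iff₀ hsk]
        exact hsum2
      have hbase : 2 * (1 - p) / s = Real.sqrt (4 * p * (1 - p)) := by
        have h2 : (2 * (1 - p) / s) ^ 2 = 4 * p * (1 - p) := by
          rw [div_pow, hsdef, Real.sq_sqrt hrpos.le, hrdef]
          field_simp
          ring
        have hnn : 0 ≤ 2 * (1 - p) / s := div_nonneg (by linarith) hspos.le
        rw [← h2, Real.sqrt_sq hnn]
      have hbase2 : Real.sqrt (4 * p * (1 - p)) ≤ Real.exp (-(2 * θ ^ 2)) := by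
        have h4 : 4 * p * (1 - p) ≤ 1 - 4 * θ ^ 2 := by nlinarith
        have h5 : (1:ℝ) - 4 * θ ^ 2 ≤ Real.exp (-(4 * θ ^ 2)) := by
          have := Real.add_one_le_exp (-(4 * θ ^ 2))
          linarith
        calc Real.sqrt (4 * p * (1 - p)) ≤ Real.sqrt (Real.exp (-(4 * θ ^ 2))) := by
              exact Real.sqrt_le_sqrt (le_trans h4 h5)
          _ = Real.exp (-(2 * θ ^ 2)) := by
              rw [← Real.exp_half]
              ring_nf
        
      calc (∑ J : Fin k → Fin T,
          (if (k : ℝ) / 2 ≤ (cnt j J : ℝ) then W J else 0))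
            ≤ (2 * (1 - p) / s) ^ k := h1
        _ = Real.sqrt (4 * p * (1 - p)) ^ k := by rw [hbase]
        _ ≤ Real.exp (-(2 * θ ^ 2)) ^ k := by
            apply pow_le_pow_left₀ (Real.sqrt_nonneg _) hbase2
        _ = Real.exp (-(2 * θ ^ 2) * k) := by
            rw [← Real.exp_nat_mul]; ring_nf
  -- union bound
  have hub : (1:ℝ) ≤ n * Real.exp (-(2 * θ ^ 2) * k) := by
    calc (1:ℝ) = ∑ J : Fin k → Fin T, W J := hWsum.symm
      _ ≤ ∑ J : Fin k → Fin T, ∑ j : Fin n,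
          (if (k : ℝ) / 2 ≤ (cnt j J : ℝ) then W J else 0) := by
          apply Finset.sum_le_sum
          intro J _
          obtain ⟨j, hj⟩ := hcon J
          have : (if (k : ℝ) / 2 ≤ (cnt j J : ℝ) then W J else 0) = W J := by
            exact if_pos hj
          calc W J = (if (k : ℝ) / 2 ≤ (cnt j J : ℝ) then W J else 0) := this.symm
            _ ≤ ∑ j' : Fin n, (if (k : ℝ) / 2 ≤ (cnt j' J : ℝ) then W J else 0) := by
                apply Finset.single_le_sum (f := fun j' =>
                  (if (k : ℝ) / 2 ≤ (cnt j' J : ℝ) then W J else 0))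
                  (fun j' _ => by by_cases h : (k : ℝ) / 2 ≤ (cnt j' J : ℝ) <;>
                    simp [h, hWnn J]) (Finset.mem_univ j)
      _ = ∑ j : Fin n, ∑ J : Fin k → Fin T,
          (if (k : ℝ) / 2 ≤ (cnt j J : ℝ) then W J else 0) := Finset.sum_comm
      _ ≤ ∑ _j : Fin n, Real.exp (-(2 * θ ^ 2) * k) :=
          Finset.sum_le_sum fun j _ => tail j
      _ = n * Real.exp (-(2 * θ ^ 2) * k) := by
          rw [Finset.sum_const, Finset.card_univ, Fintype.card_fin, nsmul_eq_mul]
  -- contradiction with hkbig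
  have hθ2 : 0 < 2 * θ ^ 2 := by positivity
  have hlog : Real.log n < 2 * θ ^ 2 * k := by
    have := (div_lt_iff₀ hθ2).mp hkbig
    linarith
  have hnpos : (0:ℝ) < n := by exact_mod_cast hn
  have : (n:ℝ) < Real.exp (2 * θ ^ 2 * k) := by
    calc (n:ℝ) = Real.exp (Real.log n) := (Real.exp_log hnpos).symm
      _ < Real.exp (2 * θ ^ 2 * k) := Real.exp_lt_exp.mpr hlog
  have hlt : n * Real.exp (-(2 * θ ^ 2) * k) < 1 := by
    have hepos : 0 < Real.exp (-(2 * θ ^ 2) * k) := Real.exp_pos _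
    have : (n:ℝ) * Real.exp (-(2 * θ ^ 2) * k) <
        Real.exp (2 * θ ^ 2 * k) * Real.exp (-(2 * θ ^ 2) * k) := by
      exact mul_lt_mul_of_pos_right this hepos
    rw [← Real.exp_add] at this
    simpa using this
  linarith
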